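/- If ∇d V is a discrete gradient for a continuously differentiable function V : ℝⁿ → ℝ, P ∈ ℝⁿˣⁿ is symmetric positive semidefinite, h > 0, and x' = x − h P ∇d V(x', x), then V(x') ≤ V(x). -/

import Mathlib

open Matrix

theorem stmt_1 (n : ℕ) (V : (Fin n → ℝ) → ℝ) (hV : ContDiff ℝ 1 V)
    (Dg : (Fin n → ℝ) → (Fin n → ℝ) → (Fin n → ℝ))
    (hDgcont : Continuous fun p : (Fin n → ℝ) × (Fin n → ℝ) => Dg p.1 p.2)
    (hchain : ∀ x y : Fin n → ℝ, V x - V y = Dg x y ⬝ᵥ (x - y))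
    (hconsistent : ∀ x : Fin n → ℝ, ∀ v : Fin n → ℝ, fderiv ℝ V x v = Dg x x ⬝ᵥ v)
    (P : Matrix (Fin n) (Fin n) ℝ) (hP : P.PosSemidef)
    (h : ℝ) (hh : 0 < h)
    (x x' : Fin n → ℝ) (hstep : x' = x - h • (P *ᵥ Dg x' x)) :
    V x' ≤ V x := by
  have key := hchain x' x
  have hdiff : x' - x = (-h) • (P *ᵥ Dg x' x) := by
    conv_lhs => rw [hstep]
    module
  rw [hdiff, dotProduct_smul] at key
  have hpsd : 0 ≤ Dg x' x ⬝ᵥ (P *ᵥ Dg x' x) := by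
    have := hP.dotProduct_mulVec_nonneg (Dg x' x)
    simpa using this
  have : V x' - V x ≤ 0 := by
    rw [key]
    simp only [smul_eq_mul]
    nlinarith
  linarith
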